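/- arXiv:2207.09952 — 8 statements merged into one kernel-verified Lean document; each statement's English description precedes it below -/
import Mathlib

section
/- Let K be a field and V a commutative K-algebra of finite dimension r with a K-basis e_0, e_1, …, e_{r−1} such that e_0 = 1 and, for every 0 ≤ i ≤ r−2, e_1·e_i = c_i·e_{i−1} + d_i·e_i + e_{i+1} for some scalars c_i, d_i ∈ K (with the convention e_{−1} = 0). Then the K-algebra homomorphism K[t] → V sending t to e_1 is surjective; consequently 1, e_1, e_1², …, e_1^{r−1} is a K-basis of V and V is isomorphic as a K-algebra to K[t]/(P), where P is the characteristic polynomial of the multiplication operator by e_1. -/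
open Polynomial

/-- If a commutative `K`-algebra of dimension `r` has a basis `e₀ = 1, e₁, …, e_{r-1}`
on which multiplication by `e₁` acts tridiagonally (with the convention `e₋₁ = 0`),
then the algebra map `K[t] → V`, `t ↦ e₁`, is surjective; consequently the powers
`1, e₁, …, e₁^{r-1}` form a basis of `V` and `V ≅ K[t]/(P)` where `P` is the
characteristic polynomial of the multiplication operator by `e₁`. -/
theorem stmt1 {K : Type*} [Field K] {V : Type*} [CommRing V] [Algebra K V]
    [FiniteDimensional K V] {r : ℕ} [NeZero r]
    (b : Module.Basis (Fin r) K V) (hb0 : b 0 = 1) (c d : Fin r → K)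
    (htri : ∀ i : Fin r, ∀ h : (i : ℕ) + 1 < r,
      b 1 * b i =
        c i • (if hi : (i : ℕ) = 0 then 0 else b ⟨(i : ℕ) - 1, by omega⟩)
          + d i • b i + b ⟨(i : ℕ) + 1, h⟩) :
    Function.Surjective (Polynomial.aeval (b 1) : K[X] →ₐ[K] V) ∧
    (∃ pb : Module.Basis (Fin r) K V, ∀ i : Fin r, pb i = b 1 ^ (i : ℕ)) ∧
    Nonempty ((K[X] ⧸ Ideal.span {(LinearMap.mulLeft K (b 1)).charpoly}) ≃ₐ[K] V) := by
  set x := b 1 with hx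
  set S := (Polynomial.aeval x : K[X] →ₐ[K] V).range with hS
  -- every basis vector lies in the range
  have key : ∀ n : ℕ, ∀ hn : n < r, b ⟨n, hn⟩ ∈ S := by
    intro n
    induction n using Nat.strong_induction_on with
    | _ n ih =>
      intro hn
      match n with
      | 0 =>
        have : (⟨0, hn⟩ : Fin r) = 0 := rfl
        rw [this, hb0]
        exact one_mem S
      | Nat.succ m =>
        have hm : m < r := by omega
        have hmem : b ⟨m, hm⟩ ∈ S := ih m (by omega) hm
        have hx1 : x ∈ S := ⟨X, by simp⟩
        have htri' := htri ⟨m, hm⟩ hn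
        have heq : b ⟨m + 1, hn⟩ = x * b ⟨m, hm⟩
            - c ⟨m, hm⟩ • (if hi : ((⟨m, hm⟩ : Fin r) : ℕ) = 0 then 0
              else b ⟨((⟨m, hm⟩ : Fin r) : ℕ) - 1, by omega⟩)
            - d ⟨m, hm⟩ • b ⟨m, hm⟩ := by
          rw [htri']; ring
        rw [heq]
        refine sub_mem (sub_mem (mul_mem hx1 hmem) ?_) (SMulMemClass.smul_mem _ hmem)
        refine SMulMemClass.smul_mem _ ?_
        by_cases h0 : m = 0
        · simp only [h0]
          simpa using zero_mem S
        · rw [dif_neg (by simpa using h0)]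
          exact ih (m - 1) (by omega) _
  have hsurj : Function.Surjective (Polynomial.aeval x : K[X] →ₐ[K] V) := by
    rw [← AlgHom.range_eq_top, eq_top_iff]
    rintro v -
    have hspan : Submodule.span K (Set.range b) ≤ Subalgebra.toSubmodule S := by
      rw [Submodule.span_le]
      rintro _ ⟨i, rfl⟩
      exact key i i.isLt
    have : v ∈ Submodule.span K (Set.range b) := by rw [b.span_eq]; trivial
    exact hspan this
  -- adjoin K {x} = ⊤
  have hint : IsIntegral K x := Algebra.IsIntegral.isIntegral x
  have hadj : Algebra.adjoin K ({x} : Set V) = ⊤ := by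
    rw [Algebra.adjoin_singleton_eq_range_aeval, AlgHom.range_eq_top]
    exact hsurj
  -- power basis of V
  let PB : PowerBasis K V := (Algebra.adjoin.powerBasis hint).map
    ((Subalgebra.equivOfEq _ _ hadj).trans Subalgebra.topEquiv)
  have hgen : PB.gen = x := rfl
  have hfinrank : Module.finrank K V = r := by
    rw [Module.finrank_eq_card_basis b, Fintype.card_fin]
  have hdim : PB.dim = r := by
    rw [← PB.finrank, hfinrank]
  have hdeg : (minpoly K x).natDegree = r := by
    have : PB.dim = (minpoly K PB.gen).natDegree := by
      simp [PB, PowerBasis.map_dim]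
    rw [hgen] at this
    omega
  refine ⟨hsurj, ?_, ?_⟩
  · refine ⟨PB.basis.reindex (finCongr hdim), fun i => ?_⟩
    rw [Module.Basis.reindex_apply, PB.coe_basis]
    congr 1
  · -- charpoly of mulLeft equals minpoly
    have hchar : (LinearMap.mulLeft K x).charpoly = minpoly K x := by
      have hdvd : minpoly K x ∣ (LinearMap.mulLeft K x).charpoly := by
        apply minpoly.dvd
        have hCH := LinearMap.aeval_self_charpoly (LinearMap.mulLeft K x)
        have hml : LinearMap.mulLeft K x = (Algebra.lmul K V) x := rfl
        rw [hml, Polynomial.aeval_algHom_apply] at hCH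
        have h1 := congrArg (fun f : V →ₗ[K] V => f 1) hCH
        simpa [hml] using h1
      have hdegc : ((LinearMap.mulLeft K x).charpoly).natDegree = r := by
        rw [LinearMap.charpoly_natDegree, hfinrank]
      have hmonic_c : ((LinearMap.mulLeft K x).charpoly).Monic :=
        LinearMap.charpoly_monic _
      have hmonic_m : (minpoly K x).Monic := minpoly.monic hint
      exact Polynomial.eq_of_monic_of_dvd_of_natDegree_le hmonic_m hmonic_c hdvd (by omega)
    rw [hchar]
    exact ⟨(AdjoinRoot.equiv' (minpoly K x) PB
      (by rw [hgen, AdjoinRoot.aeval_eq, AdjoinRoot.mk_self])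
      (by rw [hgen]; exact minpoly.aeval K x) :
      AdjoinRoot (minpoly K x) ≃ₐ[K] V)⟩
end

section
/- Let R be a (not necessarily commutative) unital ring, let A, B ∈ R be units such that 1 − A is a unit, and set C = (AB)^{−1}. Then A^{−1} − 1 and CB − 1 are units of R and the following three elements of R coincide: (B^{−1} − 1)(A^{−1} − 1)^{−1}(B − A^{−1}) = (1 − B^{−1})(1 − A)^{−1}(1 − C^{−1}) = (B − 1)(CB − 1)^{−1}(C − 1). -/
/-- In a unital ring, if `A`, `B` and `1 - A` are units and `C = (AB)⁻¹`, then
`A⁻¹ - 1` and `CB - 1` are units and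
`(B⁻¹-1)(A⁻¹-1)⁻¹(B-A⁻¹) = (1-B⁻¹)(1-A)⁻¹(1-C⁻¹) = (B-1)(CB-1)⁻¹(C-1)`. -/
theorem stmt4 {R : Type*} [Ring R] (A B : R) (hA : IsUnit A) (hB : IsUnit B)
    (h1A : IsUnit (1 - A)) :
    IsUnit (Ring.inverse A - 1) ∧
    IsUnit (Ring.inverse (A * B) * B - 1) ∧
    (Ring.inverse B - 1) * Ring.inverse (Ring.inverse A - 1) * (B - Ring.inverse A) =
      (1 - Ring.inverse B) * Ring.inverse (1 - A) *
        (1 - Ring.inverse (Ring.inverse (A * B))) ∧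
    (1 - Ring.inverse B) * Ring.inverse (1 - A) *
        (1 - Ring.inverse (Ring.inverse (A * B))) =
      (B - 1) * Ring.inverse (Ring.inverse (A * B) * B - 1) * (Ring.inverse (A * B) - 1) := by
  obtain ⟨u, rfl⟩ := hA
  obtain ⟨v, rfl⟩ := hB
  obtain ⟨w, hw⟩ := h1A
  have hau : (↑u : R) * ↑u⁻¹ = 1 := u.mul_inv
  have hua : (↑u⁻¹ : R) * ↑u = 1 := u.inv_mul
  have hbv : (↑v : R) * ↑v⁻¹ = 1 := v.mul_inv
  have hvb : (↑v⁻¹ : R) * ↑v = 1 := v.inv_mul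
  have rA : Ring.inverse (↑u : R) = ↑u⁻¹ := Ring.inverse_unit u
  have rB : Ring.inverse (↑v : R) = ↑v⁻¹ := Ring.inverse_unit v
  have rAB : Ring.inverse ((↑u : R) * ↑v) = ↑v⁻¹ * ↑u⁻¹ := by
    rw [← Units.val_mul, Ring.inverse_unit, mul_inv_rev, Units.val_mul]
  have rC : Ring.inverse (Ring.inverse ((↑u : R) * ↑v)) = ↑u * ↑v := by
    rw [rAB, ← Units.val_mul, ← mul_inv_rev, Ring.inverse_unit, inv_inv, Units.val_mul]
  have rW : Ring.inverse (1 - (↑u : R)) = ↑w⁻¹ := by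
    rw [← hw, Ring.inverse_unit]
  have r1 : (↑u⁻¹ : R) - 1 = ↑(u⁻¹ * w) := by
    rw [Units.val_mul, hw, mul_sub, mul_one, hua]
  have r2 : Ring.inverse ((↑u : R) * ↑v) * ↑v - 1 = ↑(v⁻¹ * (u⁻¹ * w) * v) := by
    rw [rAB, Units.val_mul, Units.val_mul, Units.val_mul, hw]
    calc (↑v⁻¹ * ↑u⁻¹ : R) * ↑v - 1
        = ↑v⁻¹ * ↑u⁻¹ * ↑v - ↑v⁻¹ * ↑v := by rw [hvb]
      _ = ↑v⁻¹ * (↑u⁻¹ * (1 - ↑u)) * ↑v + ↑v⁻¹ * ((↑u⁻¹ * ↑u) * ↑v) - ↑v⁻¹ * ↑v := by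
          noncomm_ring
      _ = ↑v⁻¹ * (↑u⁻¹ * (1 - ↑u)) * ↑v := by rw [hua]; noncomm_ring
  have riA1 : Ring.inverse ((↑u⁻¹ : R) - 1) = ↑w⁻¹ * ↑u := by
    rw [r1, Ring.inverse_unit, mul_inv_rev, inv_inv, Units.val_mul]
  have riX : Ring.inverse (Ring.inverse ((↑u : R) * ↑v) * ↑v - 1)
      = ↑v⁻¹ * (↑w⁻¹ * ↑u) * ↑v := by
    rw [r2, Ring.inverse_unit]
    simp [mul_inv_rev, mul_assoc]
  refine ⟨?_, ?_, ?_, ?_⟩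
  · rw [rA, r1]; exact (u⁻¹ * w).isUnit
  · rw [r2]; exact Units.isUnit _
  · rw [rA, rB, rW, rC, riA1]
    calc ((↑v⁻¹ : R) - 1) * (↑w⁻¹ * ↑u) * (↑v - ↑u⁻¹)
        = (↑v⁻¹ - 1) * ↑w⁻¹ * (↑u * ↑v) - (↑v⁻¹ - 1) * ↑w⁻¹ * (↑u * ↑u⁻¹) := by
          noncomm_ring
      _ = (1 - ↑v⁻¹) * ↑w⁻¹ * (1 - ↑u * ↑v) := by rw [hau]; noncomm_ring
  · rw [rB, rW, rC, riX, rAB]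
    have hX : (↑u : R) * ↑v * (↑v⁻¹ * ↑u⁻¹ - 1) = 1 - ↑u * ↑v := by
      calc (↑u : R) * ↑v * (↑v⁻¹ * ↑u⁻¹ - 1)
          = ↑u * (↑v * ↑v⁻¹) * ↑u⁻¹ - ↑u * ↑v := by noncomm_ring
        _ = 1 - ↑u * ↑v := by rw [hbv, mul_one, hau]
    have hY : ((↑v : R) - 1) * ↑v⁻¹ = 1 - ↑v⁻¹ := by
      rw [sub_mul, one_mul, hbv]
    calc (1 - (↑v⁻¹ : R)) * ↑w⁻¹ * (1 - ↑u * ↑v)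
        = (1 - ↑v⁻¹) * ↑w⁻¹ * (↑u * ↑v * (↑v⁻¹ * ↑u⁻¹ - 1)) := by rw [hX]
      _ = ((↑v - 1) * ↑v⁻¹) * ↑w⁻¹ * (↑u * ↑v * (↑v⁻¹ * ↑u⁻¹ - 1)) := by rw [hY]
      _ = (↑v - 1) * (↑v⁻¹ * (↑w⁻¹ * ↑u) * ↑v) * (↑v⁻¹ * ↑u⁻¹ - 1) := by noncomm_ring
end

section
/- Let J be an invertible Hermitian n×n complex matrix, and let A, B, C ∈ GL_n(ℂ) be J-unitary matrices such that ABC = 1 and 1 − A is invertible. Then the matrix H = −i·(1 − B^{−1})(1 − A)^{−1}(1 − C^{−1}) is J-self-adjoint, i.e. H†·J = J·H (equivalently, J·H is a Hermitian matrix). -/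
open Matrix

/-- If `J` is an invertible Hermitian matrix and `A`, `B`, `C` are invertible
`J`-unitary matrices with `ABC = 1` and `1 - A` invertible, then
`H = -i·(1-B⁻¹)(1-A)⁻¹(1-C⁻¹)` is `J`-self-adjoint: `Hᴴ·J = J·H`. -/
theorem stmt5 {n : ℕ} (J A B C : Matrix (Fin n) (Fin n) ℂ)
    (hJ : IsUnit J) (hJh : J.IsHermitian)
    (hA : IsUnit A) (hB : IsUnit B) (hC : IsUnit C)
    (hAJ : Aᴴ * J * A = J) (hBJ : Bᴴ * J * B = J) (hCJ : Cᴴ * J * C = J)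
    (hABC : A * B * C = 1) (h1A : IsUnit (1 - A)) :
    ((-Complex.I) • ((1 - B⁻¹) * (1 - A)⁻¹ * (1 - C⁻¹)))ᴴ * J =
      J * ((-Complex.I) • ((1 - B⁻¹) * (1 - A)⁻¹ * (1 - C⁻¹))) := by
  -- determinant units
  have hAd : IsUnit A.det := (Matrix.isUnit_iff_isUnit_det A).mp hA
  have hBd : IsUnit B.det := (Matrix.isUnit_iff_isUnit_det B).mp hB
  have hCd : IsUnit C.det := (Matrix.isUnit_iff_isUnit_det C).mp hC
  have h1Ad : IsUnit (1 - A).det := (Matrix.isUnit_iff_isUnit_det _).mp h1A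
  -- basic inverse equations
  have hAm : A * A⁻¹ = 1 := Matrix.mul_nonsing_inv A hAd
  have hAi : A⁻¹ * A = 1 := Matrix.nonsing_inv_mul A hAd
  have hBm : B * B⁻¹ = 1 := Matrix.mul_nonsing_inv B hBd
  have hBi : B⁻¹ * B = 1 := Matrix.nonsing_inv_mul B hBd
  have hXl : (1 - A) * (1 - A)⁻¹ = 1 := Matrix.mul_nonsing_inv _ h1Ad
  have hXr : (1 - A)⁻¹ * (1 - A) = 1 := Matrix.nonsing_inv_mul _ h1Ad
  -- C = B⁻¹ * A⁻¹, C⁻¹ = A * B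
  have hABCi : (A * B) * C = 1 := by rw [← hABC]
  have hC1 : C = B⁻¹ * A⁻¹ := by
    have : (A * B)⁻¹ = C := Matrix.inv_eq_right_inv hABCi
    rw [← this, Matrix.mul_inv_rev]
  have hC2 : C⁻¹ = A * B := Matrix.inv_eq_left_inv hABCi
  -- 1 - A⁻¹ and its inverse
  have eA : (1 : Matrix (Fin n) (Fin n) ℂ) - A⁻¹ = -(A⁻¹ * (1 - A)) := by
    rw [mul_sub, mul_one, hAi, neg_sub]
  have hprod : (1 - A⁻¹) * (-((1 - A)⁻¹ * A)) = 1 := by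
    rw [eA, neg_mul_neg, mul_assoc, ← mul_assoc (1 - A), hXl, one_mul, hAi]
  have hIAiu : IsUnit (1 - A⁻¹) := @isUnit_of_invertible _ _ _ (invertibleOfRightInverse _ _ hprod)
  have hIAid : IsUnit (1 - A⁻¹).det := (Matrix.isUnit_iff_isUnit_det _).mp hIAiu
  have hIAi : (1 - A⁻¹)⁻¹ = -((1 - A)⁻¹ * A) := Matrix.inv_eq_right_inv hprod
  -- J-unitarity consequences
  have hBhu : IsUnit (Bᴴ).det := by
    rw [Matrix.det_conjTranspose]; exact hBd.star
  have hChu : IsUnit (Cᴴ).det := by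
    rw [Matrix.det_conjTranspose]; exact hCd.star
  have hJB : (B⁻¹)ᴴ * J = J * B := by
    calc (B⁻¹)ᴴ * J = (Bᴴ)⁻¹ * (Bᴴ * J * B) := by
          rw [Matrix.conjTranspose_nonsing_inv, hBJ]
      _ = ((Bᴴ)⁻¹ * Bᴴ) * J * B := by simp only [← mul_assoc]
      _ = J * B := by rw [Matrix.nonsing_inv_mul _ hBhu, one_mul]
  have hJC : (C⁻¹)ᴴ * J = J * C := by
    calc (C⁻¹)ᴴ * J = (Cᴴ)⁻¹ * (Cᴴ * J * C) := by
          rw [Matrix.conjTranspose_nonsing_inv, hCJ]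
      _ = ((Cᴴ)⁻¹ * Cᴴ) * J * C := by simp only [← mul_assoc]
      _ = J * C := by rw [Matrix.nonsing_inv_mul _ hChu, one_mul]
  have hAJ' : Aᴴ * J = J * A⁻¹ := by
    calc Aᴴ * J = Aᴴ * J * (A * A⁻¹) := by rw [hAm, mul_one]
      _ = (Aᴴ * J * A) * A⁻¹ := by rw [← mul_assoc]
      _ = J * A⁻¹ := by rw [hAJ]
  -- the three key conjugation facts
  have k1 : (1 - B⁻¹)ᴴ * J = J * (1 - B) := by
    rw [conjTranspose_sub, conjTranspose_one, sub_mul, one_mul, hJB, mul_sub, mul_one]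
  have k3 : (1 - C⁻¹)ᴴ * J = J * (1 - C) := by
    rw [conjTranspose_sub, conjTranspose_one, sub_mul, one_mul, hJC, mul_sub, mul_one]
  have hkh : (1 - A)ᴴ * J = J * (1 - A⁻¹) := by
    rw [conjTranspose_sub, conjTranspose_one, sub_mul, one_mul, hAJ', mul_sub, mul_one]
  have h1Ahu : IsUnit ((1 - A)ᴴ).det := by
    rw [Matrix.det_conjTranspose]; exact h1Ad.star
  have k2 : ((1 - A)⁻¹)ᴴ * J = J * (1 - A⁻¹)⁻¹ := by
    calc ((1 - A)⁻¹)ᴴ * J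
        = ((1 - A)ᴴ)⁻¹ * (J * ((1 - A⁻¹) * (1 - A⁻¹)⁻¹)) := by
          rw [Matrix.conjTranspose_nonsing_inv, Matrix.mul_nonsing_inv _ hIAid, mul_one]
      _ = ((1 - A)ᴴ)⁻¹ * ((J * (1 - A⁻¹)) * (1 - A⁻¹)⁻¹) := by rw [mul_assoc]
      _ = ((1 - A)ᴴ)⁻¹ * (((1 - A)ᴴ * J) * (1 - A⁻¹)⁻¹) := by rw [hkh]
      _ = (((1 - A)ᴴ)⁻¹ * (1 - A)ᴴ) * J * (1 - A⁻¹)⁻¹ := by simp only [← mul_assoc]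
      _ = J * (1 - A⁻¹)⁻¹ := by rw [Matrix.nonsing_inv_mul _ h1Ahu, one_mul]
  -- the key J-free identity
  have key : (1 - B⁻¹ * A⁻¹) * ((1 - A)⁻¹ * (A - A * B))
      = (1 - B⁻¹) * ((1 - A)⁻¹ * (1 - A * B)) := by
    have h0 : (1 : Matrix (Fin n) (Fin n) ℂ) - A * B = (1 - A) + (A - A * B) := by abel
    have h4 : (1 - A)⁻¹ * (1 - A * B) = 1 + (1 - A)⁻¹ * (A - A * B) := by
      rw [h0, mul_add, hXr]
    have e1 : B⁻¹ - B⁻¹ * A⁻¹ = (B⁻¹ * A⁻¹) * (A - 1) := by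
      rw [mul_sub, mul_one, mul_assoc, hAi, mul_one]
    have e2 : (A - 1) * ((1 - A)⁻¹ * (A - A * B)) = -(A - A * B) := by
      have : (A - 1 : Matrix (Fin n) (Fin n) ℂ) = -(1 - A) := by abel
      rw [this, neg_mul, ← mul_assoc, hXl, one_mul]
    have e3 : A⁻¹ * (A - A * B) = 1 - B := by
      rw [mul_sub, hAi, ← mul_assoc, hAi, one_mul]
    have h2 : (B⁻¹ - B⁻¹ * A⁻¹) * ((1 - A)⁻¹ * (A - A * B)) = 1 - B⁻¹ := by
      rw [e1, mul_assoc, e2, mul_neg, mul_assoc, e3, mul_sub, mul_one, hBi, neg_sub]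
    have h5 : (1 : Matrix (Fin n) (Fin n) ℂ) - B⁻¹ * A⁻¹
        = (1 - B⁻¹) + (B⁻¹ - B⁻¹ * A⁻¹) := by abel
    rw [h5, add_mul, h2, h4, mul_add, mul_one, add_comm]
  -- the main J-free identity
  have main : (1 - C) * ((1 - A⁻¹)⁻¹ * (1 - B))
      = -((1 - B⁻¹) * ((1 - A)⁻¹ * (1 - C⁻¹))) := by
    have step : (1 - B⁻¹ * A⁻¹) * ((1 - A)⁻¹ * A * (1 - B))
        = (1 - B⁻¹) * ((1 - A)⁻¹ * (1 - A * B)) := by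
      calc (1 - B⁻¹ * A⁻¹) * ((1 - A)⁻¹ * A * (1 - B))
          = (1 - B⁻¹ * A⁻¹) * ((1 - A)⁻¹ * (A - A * B)) := by
            rw [mul_assoc ((1 - A)⁻¹), mul_sub, mul_one]
        _ = (1 - B⁻¹) * ((1 - A)⁻¹ * (1 - A * B)) := key
    rw [hIAi, hC2, hC1, neg_mul, mul_neg, step]
  -- assemble
  calc ((-Complex.I) • ((1 - B⁻¹) * (1 - A)⁻¹ * (1 - C⁻¹)))ᴴ * J
      = Complex.I • ((1 - C⁻¹)ᴴ * (((1 - A)⁻¹)ᴴ * ((1 - B⁻¹)ᴴ * J))) := by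
        rw [Matrix.conjTranspose_smul, Matrix.conjTranspose_mul, Matrix.conjTranspose_mul]
        simp only [star_neg, Complex.star_def, Complex.conj_I, neg_neg, Matrix.smul_mul,
          mul_assoc]
    _ = Complex.I • (J * ((1 - C) * ((1 - A⁻¹)⁻¹ * (1 - B)))) := by
        rw [k1, ← mul_assoc ((1 - A)⁻¹)ᴴ, k2, mul_assoc, ← mul_assoc (1 - C⁻¹)ᴴ, k3]
        simp only [mul_assoc]
    _ = J * ((-Complex.I) • ((1 - B⁻¹) * (1 - A)⁻¹ * (1 - C⁻¹))) := by
        rw [main]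
        simp only [Matrix.mul_smul, mul_neg, smul_neg, ← neg_smul, mul_assoc]
end

section
/- Let n ≥ 1 and let Y, Z be n×n complex matrices such that iY + 1, iZ + 1 and Y + Z are invertible. Set B = (iY − 1)(iY + 1)^{−1} and C = (iZ − 1)(iZ + 1)^{−1}. Then CB − 1 is invertible and −i·(B − 1)(CB − 1)^{−1}(C − 1) = 2·(Y + Z)^{−1}. -/
open Matrix

/-- Cayley-parametrization identity: if `iY + 1`, `iZ + 1` and `Y + Z` are invertible
and `B`, `C` are the Cayley transforms of `Y`, `Z`, then `CB - 1` is invertible and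
`-i·(B-1)(CB-1)⁻¹(C-1) = 2·(Y+Z)⁻¹`. -/
theorem stmt6 {n : ℕ} (hn : 1 ≤ n) (Y Z B C : Matrix (Fin n) (Fin n) ℂ)
    (hY : IsUnit (Complex.I • Y + 1)) (hZ : IsUnit (Complex.I • Z + 1))
    (hYZ : IsUnit (Y + Z))
    (hB : B = (Complex.I • Y - 1) * (Complex.I • Y + 1)⁻¹)
    (hC : C = (Complex.I • Z - 1) * (Complex.I • Z + 1)⁻¹) :
    IsUnit (C * B - 1) ∧
    (-Complex.I) • ((B - 1) * (C * B - 1)⁻¹ * (C - 1)) = (2 : ℂ) • (Y + Z)⁻¹ := by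
  set P := Complex.I • Y + 1 with hPdef
  set Q := Complex.I • Z + 1 with hQdef
  have hPd : IsUnit P.det := (Matrix.isUnit_iff_isUnit_det P).mp hY
  have hQd : IsUnit Q.det := (Matrix.isUnit_iff_isUnit_det Q).mp hZ
  have hAd : IsUnit (Y + Z).det := (Matrix.isUnit_iff_isUnit_det _).mp hYZ
  have hPP : P * P⁻¹ = 1 := Matrix.mul_nonsing_inv _ hPd
  have hPP' : P⁻¹ * P = 1 := Matrix.nonsing_inv_mul _ hPd
  have hQQ : Q * Q⁻¹ = 1 := Matrix.mul_nonsing_inv _ hQd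
  have hQQ' : Q⁻¹ * Q = 1 := Matrix.nonsing_inv_mul _ hQd
  have hAA : (Y + Z) * (Y + Z)⁻¹ = 1 := Matrix.mul_nonsing_inv _ hAd
  have hAA' : (Y + Z)⁻¹ * (Y + Z) = 1 := Matrix.nonsing_inv_mul _ hAd
  have hIY : Complex.I • Y - 1 = P - 2 := by
    rw [hPdef, show (2 : Matrix (Fin n) (Fin n) ℂ) = 1 + 1 from one_add_one_eq_two.symm]
    abel
  have hIZ : Complex.I • Z - 1 = Q - 2 := by
    rw [hQdef, show (2 : Matrix (Fin n) (Fin n) ℂ) = 1 + 1 from one_add_one_eq_two.symm]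
    abel
  -- B - 1 = -2 • P⁻¹, C - 1 = -2 • Q⁻¹
  have hB1 : B - 1 = (-2 : ℂ) • P⁻¹ := by
    rw [hB, hIY, ← hPP, show ((-2 : ℂ) • P⁻¹) = (-2 : Matrix (Fin n) (Fin n) ℂ) * P⁻¹ by
      rw [Algebra.smul_def, map_neg, map_ofNat]]
    noncomm_ring
  have hC1 : C - 1 = (-2 : ℂ) • Q⁻¹ := by
    rw [hC, hIZ, ← hQQ, show ((-2 : ℂ) • Q⁻¹) = (-2 : Matrix (Fin n) (Fin n) ℂ) * Q⁻¹ by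
      rw [Algebra.smul_def, map_neg, map_ofNat]]
    noncomm_ring
  have hQC : Q * C = Q - 2 := by
    rw [hC, hIZ, show Q * ((Q - 2) * Q⁻¹) = (Q - 2) * (Q * Q⁻¹) from by noncomm_ring,
      hQQ, mul_one]
  have hBP : B * P = P - 2 := by
    rw [hB, hIY, mul_assoc, hPP', mul_one]
  -- factorization of C*B - 1
  have hfact : C * B - 1 = Q⁻¹ * ((-(2 * Complex.I)) • (Y + Z)) * P⁻¹ := by
    have hcb : C * B = Q⁻¹ * ((Q - 2) * (P - 2)) * P⁻¹ := by
      rw [← hQC, ← hBP]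
      calc C * B = (Q⁻¹ * Q) * (C * B) * (P * P⁻¹) := by rw [hQQ', hPP]; noncomm_ring
        _ = Q⁻¹ * (Q * C * (B * P)) * P⁻¹ := by noncomm_ring
    have hone : (1 : Matrix (Fin n) (Fin n) ℂ) = Q⁻¹ * (Q * P) * P⁻¹ := by
      calc (1 : Matrix (Fin n) (Fin n) ℂ) = (Q⁻¹ * Q) * (P * P⁻¹) := by
            rw [hQQ', hPP, mul_one]
        _ = Q⁻¹ * (Q * P) * P⁻¹ := by noncomm_ring
    rw [hcb]
    nth_rewrite 1 [hone]
    have hmid : (Q - 2) * (P - 2) - Q * P = (-(2 * Complex.I)) • (Y + Z) := by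
      rw [hPdef, hQdef]
      simp only [Algebra.smul_def, map_neg, _root_.map_mul, map_ofNat]
      noncomm_ring
      simp
    rw [← hmid]
    noncomm_ring
  -- explicit inverse of C*B - 1
  set M := ((Complex.I / 2 : ℂ)) • (P * (Y + Z)⁻¹ * Q) with hMdef
  have hright : (C * B - 1) * M = 1 := by
    rw [hfact, hMdef]
    simp only [smul_mul_assoc, mul_smul_comm, smul_smul, mul_assoc]
    rw [show (Complex.I / 2 * -(2 * Complex.I)) = 1 by
      field_simp; linear_combination (-1 : ℂ) * Complex.I_mul_I]
    rw [one_smul, ← mul_assoc P⁻¹ P, hPP', one_mul, ← mul_assoc (Y + Z) (Y + Z)⁻¹, hAA,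
      one_mul, hQQ']
  have hunit : IsUnit (C * B - 1) := by
    apply (Matrix.isUnit_iff_isUnit_det _).mpr
    apply IsUnit.of_mul_eq_one M.det
    rw [← Matrix.det_mul, hright, Matrix.det_one]
  have hinv : (C * B - 1)⁻¹ = M := Matrix.inv_eq_right_inv hright
  refine ⟨hunit, ?_⟩
  rw [hinv, hB1, hC1, hMdef]
  simp only [smul_mul_assoc, mul_smul_comm, smul_smul, mul_assoc]
  rw [← mul_assoc P⁻¹ P, hPP', one_mul, hQQ, mul_one]
  rw [show (-Complex.I * (-2 * (Complex.I / 2 * -2))) = 2 by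
    field_simp; linear_combination (-1 : ℂ) * Complex.I_mul_I]
end

section
/- In the ℚ-algebra L = ℚ[t]/(t³ − t − 1), the element t + 1 is invertible, the element s₀ = −(t + 1)^{−1} satisfies s₀³ + 2s₀² + 3s₀ + 1 = 0, and the induced ℚ-algebra homomorphism ℚ[s]/(s³ + 2s² + 3s + 1) → L sending s to s₀ is an isomorphism. In particular ℚ[s]/(s³ + 2s² + 3s + 1) and ℚ[t]/(t³ − t − 1) are isomorphic ℚ-algebras. -/
set_option maxHeartbeats 1000000

open Polynomial

/-- In `L = ℚ[t]/(t³ - t - 1)` the element `t + 1` is invertible,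
`s₀ = -(t+1)⁻¹` satisfies `s₀³ + 2s₀² + 3s₀ + 1 = 0`, and the induced
`ℚ`-algebra homomorphism `ℚ[s]/(s³ + 2s² + 3s + 1) → L`, `s ↦ s₀`,
is an isomorphism. -/
theorem stmt7 :
    ∀ t : ℚ[X] ⧸ Ideal.span {(X : ℚ[X]) ^ 3 - X - 1},
      t = Ideal.Quotient.mk (Ideal.span {(X : ℚ[X]) ^ 3 - X - 1}) X →
        IsUnit (t + 1) ∧
        ∀ s₀ : ℚ[X] ⧸ Ideal.span {(X : ℚ[X]) ^ 3 - X - 1},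
          s₀ = -Ring.inverse (t + 1) →
            s₀ ^ 3 + 2 * s₀ ^ 2 + 3 * s₀ + 1 = 0 ∧
            ∃ φ : (ℚ[X] ⧸ Ideal.span {(X : ℚ[X]) ^ 3 + 2 * X ^ 2 + 3 * X + 1}) ≃ₐ[ℚ]
                (ℚ[X] ⧸ Ideal.span {(X : ℚ[X]) ^ 3 - X - 1}),
              φ (Ideal.Quotient.mk (Ideal.span {(X : ℚ[X]) ^ 3 + 2 * X ^ 2 + 3 * X + 1}) X)
                = s₀ := by
  intro t ht
  have hP : t ^ 3 - t - 1 = 0 := by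
    subst ht
    have h0 : (Ideal.Quotient.mk (Ideal.span {(X : ℚ[X]) ^ 3 - X - 1}))
        ((X : ℚ[X]) ^ 3 - X - 1) = 0 :=
      Ideal.Quotient.eq_zero_iff_mem.mpr (Ideal.subset_span rfl)
    rw [map_sub, map_sub, map_pow, map_one] at h0
    exact h0
  have hu : (t + 1) * (t ^ 2 - t) = 1 := by linear_combination hP
  have hu' : (t ^ 2 - t) * (t + 1) = 1 := by linear_combination hP
  refine ⟨IsUnit.of_mul_eq_one _ hu, ?_⟩
  intro s₀ hs₀
  have hinv : Ring.inverse (t + 1) = t ^ 2 - t := by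
    have := Ring.inverse_unit ⟨t + 1, t ^ 2 - t, hu, hu'⟩
    simpa using this
  have hs : s₀ = t - t ^ 2 := by rw [hs₀, hinv]; ring
  constructor
  · rw [hs]; linear_combination (-t ^ 3 + 3 * t ^ 2 - 2 * t - 1) * hP
  · have hQr : ∀ r : ℚ[X] ⧸ Ideal.span {(X : ℚ[X]) ^ 3 + 2 * X ^ 2 + 3 * X + 1},
        r = Ideal.Quotient.mk (Ideal.span {(X : ℚ[X]) ^ 3 + 2 * X ^ 2 + 3 * X + 1}) X →
        r ^ 3 + 2 * r ^ 2 + 3 * r + 1 = 0 := by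
      intro r hr
      subst hr
      have h0 : (Ideal.Quotient.mk (Ideal.span {(X : ℚ[X]) ^ 3 + 2 * X ^ 2 + 3 * X + 1}))
          ((X : ℚ[X]) ^ 3 + 2 * X ^ 2 + 3 * X + 1) = 0 :=
        Ideal.Quotient.eq_zero_iff_mem.mpr (Ideal.subset_span rfl)
      rw [map_add, map_add, map_add, map_mul, map_mul, map_pow, map_pow, map_one,
        map_ofNat, map_ofNat] at h0
      exact h0
    set r : ℚ[X] ⧸ Ideal.span {(X : ℚ[X]) ^ 3 + 2 * X ^ 2 + 3 * X + 1} :=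
      Ideal.Quotient.mk (Ideal.span {(X : ℚ[X]) ^ 3 + 2 * X ^ 2 + 3 * X + 1}) X with hrdef
    have hQ : r ^ 3 + 2 * r ^ 2 + 3 * r + 1 = 0 := hQr r hrdef
    have hfI : ∀ a : ℚ[X], a ∈ Ideal.span {(X : ℚ[X]) ^ 3 + 2 * X ^ 2 + 3 * X + 1} →
        aeval (t - t ^ 2) a = 0 := by
      intro a ha
      rw [Ideal.mem_span_singleton] at ha
      obtain ⟨c, rfl⟩ := ha
      rw [map_mul]
      have hz : aeval (t - t ^ 2) ((X : ℚ[X]) ^ 3 + 2 * X ^ 2 + 3 * X + 1) = 0 := by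
        simp only [map_add, map_mul, map_pow, aeval_X, map_one, map_ofNat]
        linear_combination (-t ^ 3 + 3 * t ^ 2 - 2 * t - 1) * hP
      rw [hz, zero_mul]
    have hgI : ∀ a : ℚ[X], a ∈ Ideal.span {(X : ℚ[X]) ^ 3 - X - 1} →
        aeval (r ^ 2 + 2 * r + 2) a = 0 := by
      intro a ha
      rw [Ideal.mem_span_singleton] at ha
      obtain ⟨c, rfl⟩ := ha
      rw [map_mul]
      have hz : aeval (r ^ 2 + 2 * r + 2) ((X : ℚ[X]) ^ 3 - X - 1) = 0 := by
        simp only [map_add, map_sub, map_mul, map_pow, aeval_X, map_one, map_ofNat]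
        linear_combination (r ^ 3 + 4 * r ^ 2 + 7 * r + 5) * hQ
      rw [hz, zero_mul]
    set f := Ideal.Quotient.liftₐ (Ideal.span {(X : ℚ[X]) ^ 3 + 2 * X ^ 2 + 3 * X + 1})
      (aeval (t - t ^ 2)) hfI with hf
    set g := Ideal.Quotient.liftₐ (Ideal.span {(X : ℚ[X]) ^ 3 - X - 1})
      (aeval (r ^ 2 + 2 * r + 2)) hgI with hg
    have hfmk : ∀ p : ℚ[X],
        f (Ideal.Quotient.mk (Ideal.span {(X : ℚ[X]) ^ 3 + 2 * X ^ 2 + 3 * X + 1}) p)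
          = aeval (t - t ^ 2) p := fun p => Ideal.Quotient.lift_mk _ _ hfI
    have hgmk : ∀ p : ℚ[X],
        g (Ideal.Quotient.mk (Ideal.span {(X : ℚ[X]) ^ 3 - X - 1}) p)
          = aeval (r ^ 2 + 2 * r + 2) p := fun p => Ideal.Quotient.lift_mk _ _ hgI
    have hfg : f.comp g = AlgHom.id ℚ (ℚ[X] ⧸ Ideal.span {(X : ℚ[X]) ^ 3 - X - 1}) := by
      apply Ideal.Quotient.algHom_ext
      apply Polynomial.algHom_ext
      simp only [AlgHom.coe_comp, Function.comp_apply, Ideal.Quotient.mkₐ_eq_mk,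
        AlgHom.coe_id, id_eq]
      rw [hgmk, aeval_X, map_add, map_add, map_mul, map_pow, hfmk, aeval_X, map_ofNat, ← ht]
      linear_combination (t - 2) * hP
    have hgf : g.comp f
        = AlgHom.id ℚ (ℚ[X] ⧸ Ideal.span {(X : ℚ[X]) ^ 3 + 2 * X ^ 2 + 3 * X + 1}) := by
      apply Ideal.Quotient.algHom_ext
      apply Polynomial.algHom_ext
      simp only [AlgHom.coe_comp, Function.comp_apply, Ideal.Quotient.mkₐ_eq_mk,
        AlgHom.coe_id, id_eq]
      rw [hfmk, aeval_X, ht, map_sub, map_pow, hgmk, aeval_X, ← hrdef]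
      linear_combination (-r - 2) * hQ
    refine ⟨AlgEquiv.ofAlgHom f g hfg hgf, ?_⟩
    show f (Ideal.Quotient.mk (Ideal.span {(X : ℚ[X]) ^ 3 + 2 * X ^ 2 + 3 * X + 1}) X) = s₀
    rw [hfmk, aeval_X, hs]
end

section
/- The polynomial t³ − t − 1 is irreducible over ℚ, so V = ℚ[t]/(t³ − t − 1) is a field. The unique ℚ-linear form ε on V determined by ε(1) = 1, ε(t) = 0, ε(t²) = 1 satisfies ε(x) = tr_{V/ℚ}(α·x) for all x ∈ V, where α = (9 + 3t − 2t²)/23. -/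
open Polynomial AdjoinRoot


private lemma irrP1 : Irreducible ((X : ℚ[X]) ^ 3 - X - 1) := by
  have hd : ((X : ℚ[X]) ^ 3 - X - 1).natDegree = 3 := by compute_degree!
  have hne : ((X : ℚ[X]) ^ 3 - X - 1) ≠ 0 := fun h => by simp [h] at hd
  rw [Polynomial.irreducible_iff_roots_eq_zero_of_degree_le_three (by omega) (by omega),
    Multiset.eq_zero_iff_forall_notMem]
  intro r hr
  rw [mem_roots hne] at hr
  have hr' : r ^ 3 - r - 1 = 0 := by simpa [IsRoot] using hr
  have hm : ((X : ℤ[X]) ^ 3 - X - 1).Monic := by monicity!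
  have hz : aeval r ((X : ℤ[X]) ^ 3 - X - 1) = 0 := by
    simp only [map_sub, map_pow, aeval_X, map_one]
    linear_combination hr'
  obtain ⟨n, hn, hdvd⟩ := exists_integer_of_is_root_of_monic hm hz
  have hc : ((X : ℤ[X]) ^ 3 - X - 1).coeff 0 = -1 := by simp
  rw [hc] at hdvd
  have hu := Int.isUnit_iff.mp (isUnit_of_dvd_one (dvd_neg.mp hdvd))
  have hn' : r = (n : ℚ) := by simpa using hn
  rcases hu with rfl | rfl <;> rw [hn'] at hr' <;> norm_num at hr'


private lemma irrP2 : Irreducible ((X : ℚ[X]) ^ 3 - 2 * X ^ 2 + X - 1) := by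
  have hd : ((X : ℚ[X]) ^ 3 - 2 * X ^ 2 + X - 1).natDegree = 3 := by compute_degree!
  have hne : ((X : ℚ[X]) ^ 3 - 2 * X ^ 2 + X - 1) ≠ 0 := fun h => by simp [h] at hd
  rw [Polynomial.irreducible_iff_roots_eq_zero_of_degree_le_three (by omega) (by omega),
    Multiset.eq_zero_iff_forall_notMem]
  intro r hr
  rw [mem_roots hne] at hr
  have hr' : r ^ 3 - 2 * r ^ 2 + r - 1 = 0 := by simpa [IsRoot] using hr
  have hm : ((X : ℤ[X]) ^ 3 - 2 * X ^ 2 + X - 1).Monic := by monicity!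
  have hz : aeval r ((X : ℤ[X]) ^ 3 - 2 * X ^ 2 + X - 1) = 0 := by
    simp only [map_sub, map_add, map_mul, map_pow, aeval_X, map_one, map_ofNat]
    linear_combination hr'
  obtain ⟨n, hn, hdvd⟩ := exists_integer_of_is_root_of_monic hm hz
  have hc : ((X : ℤ[X]) ^ 3 - 2 * X ^ 2 + X - 1).coeff 0 = -1 := by simp
  rw [hc] at hdvd
  have hu := Int.isUnit_iff.mp (isUnit_of_dvd_one (dvd_neg.mp hdvd))
  have hn' : r = (n : ℚ) := by simpa using hn
  rcases hu with rfl | rfl <;> rw [hn'] at hr' <;> norm_num at hr'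

set_option maxHeartbeats 1000000 in
private lemma traces :
    Algebra.trace ℚ (AdjoinRoot ((X : ℚ[X]) ^ 3 - X - 1)) 1 = 3 ∧
    Algebra.trace ℚ (AdjoinRoot ((X : ℚ[X]) ^ 3 - X - 1)) (root _) = 0 ∧
    Algebra.trace ℚ (AdjoinRoot ((X : ℚ[X]) ^ 3 - X - 1)) ((root _) ^ 2) = 2 := by
  have hd : ((X : ℚ[X]) ^ 3 - X - 1).natDegree = 3 := by compute_degree!
  have hmon : ((X : ℚ[X]) ^ 3 - X - 1).Monic := by monicity!
  have hne : ((X : ℚ[X]) ^ 3 - X - 1) ≠ 0 := hmon.ne_zero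
  haveI : Nontrivial (AdjoinRoot ((X : ℚ[X]) ^ 3 - X - 1)) :=
    AdjoinRoot.nontrivial _ (by rw [degree_eq_natDegree hne, hd]; simp)
  let pb : PowerBasis ℚ (AdjoinRoot ((X : ℚ[X]) ^ 3 - X - 1)) := AdjoinRoot.powerBasis hne
  haveI : Module.Free ℚ (AdjoinRoot ((X : ℚ[X]) ^ 3 - X - 1)) := Module.Free.of_basis pb.basis
  haveI : Module.Finite ℚ (AdjoinRoot ((X : ℚ[X]) ^ 3 - X - 1)) := Module.Finite.of_basis pb.basis
  have hfin : Module.finrank ℚ (AdjoinRoot ((X : ℚ[X]) ^ 3 - X - 1)) = 3 := by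
    rw [pb.finrank, AdjoinRoot.powerBasis_dim, hd]
  set t : AdjoinRoot ((X : ℚ[X]) ^ 3 - X - 1) := root ((X : ℚ[X]) ^ 3 - X - 1) with htdef
  have e3 : t ^ 3 - t - 1 = 0 := by
    have h : (aeval t) ((X : ℚ[X]) ^ 3 - X - 1) = 0 := by
      rw [htdef, AdjoinRoot.aeval_eq, AdjoinRoot.mk_self]
    simpa only [map_sub, map_pow, aeval_X, map_one] using h
  refine ⟨?_, ?_, ?_⟩
  · have h1 : (1 : AdjoinRoot ((X : ℚ[X]) ^ 3 - X - 1)) = algebraMap ℚ _ 1 := by simp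
    rw [h1, Algebra.trace_algebraMap, hfin]; norm_num
  · have hmin : minpoly ℚ t = (X : ℚ[X]) ^ 3 - X - 1 := by
      rw [htdef, AdjoinRoot.minpoly_root hne, hmon.leadingCoeff]; simp
    have h := pb.trace_gen_eq_nextCoeff_minpoly
    rw [AdjoinRoot.powerBasis_gen, ← htdef, hmin] at h
    rw [h, nextCoeff_of_natDegree_pos (by omega), hd]
    simp [coeff_one, coeff_X]
  · have hint : IsIntegral ℚ (t ^ 2) := IsIntegral.of_finite ℚ _
    have ht4 : t = (t ^ 2) ^ 2 - t ^ 2 := by linear_combination (-t) * e3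
    have hmem : pb.gen ∈ Algebra.adjoin ℚ ({t ^ 2} : Set (AdjoinRoot ((X : ℚ[X]) ^ 3 - X - 1))) := by
      rw [AdjoinRoot.powerBasis_gen, ← htdef]
      have h1 : t ^ 2 ∈ Algebra.adjoin ℚ ({t ^ 2} : Set (AdjoinRoot ((X : ℚ[X]) ^ 3 - X - 1))) :=
        Algebra.subset_adjoin rfl
      have hm2 : (t ^ 2) ^ 2 - t ^ 2 ∈ Algebra.adjoin ℚ ({t ^ 2} : Set (AdjoinRoot ((X : ℚ[X]) ^ 3 - X - 1))) :=
        sub_mem (pow_mem h1 2) h1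
      rwa [← ht4] at hm2
    have hmin2 : minpoly ℚ (t ^ 2) = (X : ℚ[X]) ^ 3 - 2 * X ^ 2 + X - 1 := by
      refine (minpoly.eq_of_irreducible_of_monic irrP2 ?_ (by monicity!)).symm
      simp only [map_sub, map_add, map_mul, map_pow, aeval_X, map_one, map_ofNat]
      linear_combination ((t ^ 3) - t + 1) * e3
    have h := (PowerBasis.ofAdjoinEqTop hint (PowerBasis.adjoin_eq_top_of_gen_mem_adjoin hmem)).trace_gen_eq_nextCoeff_minpoly
    rw [PowerBasis.ofAdjoinEqTop_gen, hmin2] at h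
    have hd2 : ((X : ℚ[X]) ^ 3 - 2 * X ^ 2 + X - 1).natDegree = 3 := by compute_degree!
    rw [h, nextCoeff_of_natDegree_pos (by omega), hd2]
    simp [coeff_one, coeff_X]

set_option maxHeartbeats 1000000 in
private lemma master (ε : AdjoinRoot ((X : ℚ[X]) ^ 3 - X - 1) →ₗ[ℚ] ℚ)
    (h1 : ε 1 = 1) (h2 : ε (root _) = 0) (h3 : ε ((root _) ^ 2) = 1)
    (x : AdjoinRoot ((X : ℚ[X]) ^ 3 - X - 1)) :
    ε x = Algebra.trace ℚ (AdjoinRoot ((X : ℚ[X]) ^ 3 - X - 1))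
      (((23 : ℚ)⁻¹ • (9 + 3 * root ((X : ℚ[X]) ^ 3 - X - 1)
        - 2 * (root ((X : ℚ[X]) ^ 3 - X - 1)) ^ 2)) * x) := by
  obtain ⟨T1, Tt, Tt2⟩ := traces
  have hd : ((X : ℚ[X]) ^ 3 - X - 1).natDegree = 3 := by compute_degree!
  have hmon : ((X : ℚ[X]) ^ 3 - X - 1).Monic := by monicity!
  have hne : ((X : ℚ[X]) ^ 3 - X - 1) ≠ 0 := hmon.ne_zero
  let pb : PowerBasis ℚ (AdjoinRoot ((X : ℚ[X]) ^ 3 - X - 1)) := AdjoinRoot.powerBasis hne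
  set t : AdjoinRoot ((X : ℚ[X]) ^ 3 - X - 1) := root ((X : ℚ[X]) ^ 3 - X - 1) with htdef
  have e3 : t ^ 3 - t - 1 = 0 := by
    have h : (aeval t) ((X : ℚ[X]) ^ 3 - X - 1) = 0 := by
      rw [htdef, AdjoinRoot.aeval_eq, AdjoinRoot.mk_self]
    simpa only [map_sub, map_pow, aeval_X, map_one] using h
  have Tt3 : Algebra.trace ℚ (AdjoinRoot ((X : ℚ[X]) ^ 3 - X - 1)) (t ^ 3) = 3 := by
    have e3' : t ^ 3 = 1 + t := by linear_combination e3
    rw [e3', map_add, T1, Tt]; norm_num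
  have Tt4 : Algebra.trace ℚ (AdjoinRoot ((X : ℚ[X]) ^ 3 - X - 1)) (t ^ 4) = 2 := by
    have e4 : t ^ 4 = t + t ^ 2 := by linear_combination t * e3
    rw [e4, map_add, Tt, Tt2]; norm_num
  have hdim : pb.dim = 3 := by rw [AdjoinRoot.powerBasis_dim, hd]
  have hspan : Submodule.span ℚ ({1, t, t ^ 2} : Set (AdjoinRoot ((X : ℚ[X]) ^ 3 - X - 1))) = ⊤ := by
    rw [eq_top_iff, ← pb.basis.span_eq, Submodule.span_le]
    rintro y ⟨i, rfl⟩
    have hi := i.isLt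
    have hb : pb.basis i = t ^ (i : ℕ) := by rw [pb.basis_eq_pow, AdjoinRoot.powerBasis_gen]
    rw [hb]
    have hc : (i : ℕ) = 0 ∨ (i : ℕ) = 1 ∨ (i : ℕ) = 2 := by omega
    rcases hc with h | h | h <;> rw [h] <;> exact Submodule.subset_span (by simp)
  have key : ε = (Algebra.trace ℚ (AdjoinRoot ((X : ℚ[X]) ^ 3 - X - 1))).comp
      (LinearMap.mulLeft ℚ (((23 : ℚ)⁻¹ • (9 + 3 * t - 2 * t ^ 2)) : AdjoinRoot ((X : ℚ[X]) ^ 3 - X - 1))) := by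
    refine LinearMap.ext_on hspan ?_
    intro y hy
    simp only [Set.mem_insert_iff, Set.mem_singleton_iff] at hy
    rcases hy with rfl | rfl | rfl
    · rw [LinearMap.comp_apply, LinearMap.mulLeft_apply, h1, mul_one, map_smul]
      have hexp : (9 + 3 * t - 2 * t ^ 2 : AdjoinRoot ((X : ℚ[X]) ^ 3 - X - 1)) =
          (9 : ℚ) • (1 : AdjoinRoot ((X : ℚ[X]) ^ 3 - X - 1)) + (3 : ℚ) • t - (2 : ℚ) • t ^ 2 := by
        simp only [Algebra.smul_def, map_ofNat]; ring
      rw [hexp, map_sub, map_add, map_smul, map_smul, map_smul, T1, Tt, Tt2]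
      norm_num
    · rw [LinearMap.comp_apply, LinearMap.mulLeft_apply, h2, smul_mul_assoc, map_smul]
      have hexp : ((9 + 3 * t - 2 * t ^ 2) * t : AdjoinRoot ((X : ℚ[X]) ^ 3 - X - 1)) =
          (9 : ℚ) • t + (3 : ℚ) • t ^ 2 - (2 : ℚ) • t ^ 3 := by
        simp only [Algebra.smul_def, map_ofNat]; ring
      rw [hexp, map_sub, map_add, map_smul, map_smul, map_smul, Tt, Tt2, Tt3]
      norm_num
    · rw [LinearMap.comp_apply, LinearMap.mulLeft_apply, h3, smul_mul_assoc, map_smul]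
      have hexp : ((9 + 3 * t - 2 * t ^ 2) * t ^ 2 : AdjoinRoot ((X : ℚ[X]) ^ 3 - X - 1)) =
          (9 : ℚ) • t ^ 2 + (3 : ℚ) • t ^ 3 - (2 : ℚ) • t ^ 4 := by
        simp only [Algebra.smul_def, map_ofNat]; ring
      rw [hexp, map_sub, map_add, map_smul, map_smul, map_smul, Tt2, Tt3, Tt4]
      norm_num
  rw [key]
  simp only [LinearMap.comp_apply, LinearMap.mulLeft_apply]

set_option maxHeartbeats 1000000 in
/-- `t³ - t - 1` is irreducible over `ℚ`, so `V = ℚ[t]/(t³ - t - 1)` is a field;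
the `ℚ`-linear form `ε` with `ε(1) = 1`, `ε(t) = 0`, `ε(t²) = 1` satisfies
`ε(x) = tr_{V/ℚ}(α·x)` for `α = (9 + 3t - 2t²)/23`. -/
theorem stmt9 :
    Irreducible ((X : ℚ[X]) ^ 3 - X - 1) ∧
    IsField (ℚ[X] ⧸ Ideal.span {(X : ℚ[X]) ^ 3 - X - 1}) ∧
    ∀ t : ℚ[X] ⧸ Ideal.span {(X : ℚ[X]) ^ 3 - X - 1},
      t = Ideal.Quotient.mk (Ideal.span {(X : ℚ[X]) ^ 3 - X - 1}) X →
      ∀ ε : (ℚ[X] ⧸ Ideal.span {(X : ℚ[X]) ^ 3 - X - 1}) →ₗ[ℚ] ℚ,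
        ε 1 = 1 → ε t = 0 → ε (t ^ 2) = 1 →
        ∀ x : ℚ[X] ⧸ Ideal.span {(X : ℚ[X]) ^ 3 - X - 1},
          ε x = Algebra.trace ℚ (ℚ[X] ⧸ Ideal.span {(X : ℚ[X]) ^ 3 - X - 1})
            (((23 : ℚ)⁻¹ • (9 + 3 * t - 2 * t ^ 2)) * x) := by
  refine ⟨irrP1, ?_, ?_⟩
  · exact (Ideal.Quotient.maximal_ideal_iff_isField_quotient _).mp
      (PrincipalIdealRing.isMaximal_of_irreducible irrP1)
  · intro t ht ε h1 h2 h3 x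
    subst ht
    exact master ε h1 h2 h3 x
end

section
/- The polynomial s³ + 2s² + 3s + 1 is irreducible over ℚ, so V = ℚ[s]/(s³ + 2s² + 3s + 1) is a field. The unique ℚ-linear form ε on V determined by ε(1) = 1, ε(s) = 0, ε(s²) = −1 satisfies ε(x) = tr_{V/ℚ}(α·x) for all x ∈ V, where α = (19 + 9s + 8s²)/23. -/
open Polynomial

noncomputable section Stmt10Aux

def myP : ℚ[X] := X ^ 3 + 2 * X ^ 2 + 3 * X + 1

lemma myP_monic : myP.Monic := by unfold myP; monicity!

lemma myP_natDegree : myP.natDegree = 3 := by unfold myP; compute_degree!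

lemma myP_irr : Irreducible myP := by
  have hz : Irreducible ((X : ℤ[X]) ^ 3 + 2 * X ^ 2 + 3 * X + 1) := by
    have hm : ((X : ℤ[X]) ^ 3 + 2 * X ^ 2 + 3 * X + 1).Monic := by monicity!
    apply hm.irreducible_of_irreducible_map (Int.castRingHom (ZMod 2))
    have hmap : ((X : ℤ[X]) ^ 3 + 2 * X ^ 2 + 3 * X + 1).map (Int.castRingHom (ZMod 2))
        = X ^ 3 + 2 * X ^ 2 + 3 * X + 1 := by
      simp [Polynomial.map_add, Polynomial.map_mul, Polynomial.map_pow, Polynomial.map_ofNat]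
    rw [hmap]
    have hd2 : ((X : (ZMod 2)[X]) ^ 3 + 2 * X ^ 2 + 3 * X + 1).natDegree = 3 := by
      compute_degree!
    rw [irreducible_iff_roots_eq_zero_of_degree_le_three (by omega) (by omega)]
    rw [Multiset.eq_zero_iff_forall_notMem]
    intro r hr
    rw [mem_roots'] at hr
    have h2 := hr.2
    rw [IsRoot, eval_add, eval_add, eval_add, eval_mul, eval_mul, eval_pow, eval_pow,
      eval_X, eval_one] at h2
    simp only [eval_ofNat] at h2
    clear hr
    revert h2
    revert r
    decide
  have hprim : ((X : ℤ[X]) ^ 3 + 2 * X ^ 2 + 3 * X + 1).IsPrimitive := by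
    have hm : ((X : ℤ[X]) ^ 3 + 2 * X ^ 2 + 3 * X + 1).Monic := by monicity!
    exact hm.isPrimitive
  have := (Polynomial.IsPrimitive.Int.irreducible_iff_irreducible_map_cast hprim).mp hz
  have hmap : ((X : ℤ[X]) ^ 3 + 2 * X ^ 2 + 3 * X + 1).map (Int.castRingHom ℚ)
      = myP := by
    unfold myP
    simp [Polynomial.map_add, Polynomial.map_mul, Polynomial.map_pow, Polynomial.map_ofNat]
  rwa [hmap] at this


lemma myP_degree : myP.degree = 3 := by
  rw [degree_eq_natDegree myP_monic.ne_zero, myP_natDegree]; rfl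

lemma my_modeq {a b r : ℚ[X]} (h : a = myP * b + r) (hr : r.degree < 3) :
    a %ₘ myP = r := by
  rw [h, add_modByMonic, self_mul_modByMonic myP_monic, zero_add,
    (modByMonic_eq_self_iff myP_monic).mpr (by rw [myP_degree]; exact hr)]

lemma m3 : (X ^ 3 : ℚ[X]) %ₘ myP = C (-2) * X ^ 2 + C (-3) * X + C (-1) := by
  apply my_modeq (b := 1)
  · unfold myP; simp only [map_neg, map_one, map_ofNat]; ring
  · refine lt_of_le_of_lt ?_ (by decide : (2 : WithBot ℕ) < 3); compute_degree

lemma m4 : (X ^ 4 : ℚ[X]) %ₘ myP = C 1 * X ^ 2 + C 5 * X + C 2 := by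
  apply my_modeq (b := X - 2)
  · unfold myP; simp only [map_neg, map_one, map_ofNat]; ring
  · refine lt_of_le_of_lt ?_ (by decide : (2 : WithBot ℕ) < 3); compute_degree

lemma m5 : (X ^ 5 : ℚ[X]) %ₘ myP = C 3 * X ^ 2 + C (-1) * X + C (-1) := by
  apply my_modeq (b := X ^ 2 - 2 * X + 1)
  · unfold myP; simp only [map_neg, map_one, map_ofNat]; ring
  · refine lt_of_le_of_lt ?_ (by decide : (2 : WithBot ℕ) < 3); compute_degree

lemma m6 : (X ^ 6 : ℚ[X]) %ₘ myP = C (-7) * X ^ 2 + C (-10) * X + C (-3) := by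
  apply my_modeq (b := X ^ 3 - 2 * X ^ 2 + X + 3)
  · unfold myP; simp only [map_neg, map_one, map_ofNat]; ring
  · refine lt_of_le_of_lt ?_ (by decide : (2 : WithBot ℕ) < 3); compute_degree

lemma mlow (k : ℕ) (hk : k < 3) : (X ^ k : ℚ[X]) %ₘ myP = X ^ k := by
  rw [(modByMonic_eq_self_iff myP_monic).mpr]
  rw [myP_degree, degree_X_pow]
  exact_mod_cast hk

lemma traceMk (Q : ℚ[X]) :
    Algebra.trace ℚ (AdjoinRoot myP) (AdjoinRoot.mk myP Q)
      = ∑ i ∈ Finset.range 3, ((Q * X ^ i) %ₘ myP).coeff i := by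
  classical
  rw [Algebra.trace_eq_matrix_trace (AdjoinRoot.powerBasis' myP_monic).basis, Matrix.trace]
  have h1 : ∀ i : Fin myP.natDegree,
      Matrix.diag (Algebra.leftMulMatrix (AdjoinRoot.powerBasis' myP_monic).basis
        (AdjoinRoot.mk myP Q)) i = ((Q * X ^ (i : ℕ)) %ₘ myP).coeff i := by
    intro (i : Fin (AdjoinRoot.powerBasis' myP_monic).dim)
    rw [Matrix.diag_apply, Algebra.leftMulMatrix_eq_repr_mul,
      (AdjoinRoot.powerBasis' myP_monic).basis_eq_pow]
    have hgen : (AdjoinRoot.powerBasis' myP_monic).gen = AdjoinRoot.mk myP X := rfl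
    rw [hgen, ← map_pow, ← map_mul]
    have hb : (AdjoinRoot.powerBasis' myP_monic).basis = AdjoinRoot.powerBasisAux' myP_monic :=
      rfl
    rw [hb]
    exact (AdjoinRoot.powerBasisAux'_repr_apply_to_fun myP_monic _ i).trans
      (by rw [AdjoinRoot.modByMonicHom_mk])
  calc (∑ i : Fin myP.natDegree, Matrix.diag (Algebra.leftMulMatrix
          (AdjoinRoot.powerBasis' myP_monic).basis (AdjoinRoot.mk myP Q)) i)
      = ∑ i : Fin myP.natDegree, ((Q * X ^ (i : ℕ)) %ₘ myP).coeff i := by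
        exact Finset.sum_congr rfl fun i _ => h1 i
    _ = ∑ i ∈ Finset.range myP.natDegree, ((Q * X ^ i) %ₘ myP).coeff i :=
        Fin.sum_univ_eq_sum_range (fun i => ((Q * X ^ i) %ₘ myP).coeff i) _
    _ = ∑ i ∈ Finset.range 3, ((Q * X ^ i) %ₘ myP).coeff i := by rw [myP_natDegree]


def Tr (k : ℕ) : ℚ := Algebra.trace ℚ (AdjoinRoot myP) (AdjoinRoot.mk myP (X ^ k))

lemma traceX (k : ℕ) : Tr k
    = ((X ^ k : ℚ[X]) %ₘ myP).coeff 0 + ((X ^ (k+1) : ℚ[X]) %ₘ myP).coeff 1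
      + ((X ^ (k+2) : ℚ[X]) %ₘ myP).coeff 2 := by
  rw [Tr, traceMk]
  rw [Finset.sum_range_succ, Finset.sum_range_succ, Finset.sum_range_one]
  simp [← pow_add, ← pow_succ]

lemma T0 : Tr 0 = 3 := by
  rw [traceX, mlow 0 (by norm_num), mlow 1 (by norm_num), mlow 2 (by norm_num)]
  norm_num [coeff_X_pow, coeff_C, coeff_one, coeff_X]

lemma T1 : Tr 1 = -2 := by
  rw [traceX, mlow 1 (by norm_num), mlow 2 (by norm_num), m3]
  norm_num [coeff_X_pow, coeff_C, coeff_one, coeff_X]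

lemma T2 : Tr 2 = -2 := by
  rw [traceX, mlow 2 (by norm_num), m3, m4]
  norm_num [coeff_X_pow, coeff_C, coeff_one, coeff_X]

lemma T3 : Tr 3 = 7 := by
  rw [traceX, m3, m4, m5]
  norm_num [coeff_X_pow, coeff_C, coeff_one, coeff_X]

lemma T4 : Tr 4 = -6 := by
  rw [traceX, m4, m5, m6]
  norm_num [coeff_X_pow, coeff_C, coeff_one, coeff_X]

lemma traceAlpha (k : ℕ) :
    Algebra.trace ℚ (AdjoinRoot myP)
      ((((23:ℚ)⁻¹ • (19 + 9 * AdjoinRoot.mk myP X + 8 * (AdjoinRoot.mk myP X) ^ 2)))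
        * (AdjoinRoot.mk myP X) ^ k)
    = (23:ℚ)⁻¹ * (19 * Tr k + 9 * Tr (k+1) + 8 * Tr (k+2)) := by
  have hz : (19 + 9 * AdjoinRoot.mk myP X + 8 * (AdjoinRoot.mk myP X) ^ 2)
      * (AdjoinRoot.mk myP X) ^ k
      = AdjoinRoot.mk myP ((19 + 9 * X + 8 * X ^ 2) * X ^ k) := by
    rw [map_mul, map_add, map_add, map_mul, map_mul, map_pow, map_pow, map_ofNat,
      map_ofNat, map_ofNat]
  have hpoly : ((19 + 9 * X + 8 * X ^ 2) * X ^ k : ℚ[X])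
      = (19:ℚ) • (X ^ k) + (9:ℚ) • (X ^ (k+1)) + (8:ℚ) • (X ^ (k+2)) := by
    simp only [Polynomial.smul_eq_C_mul, map_ofNat]
    ring
  rw [smul_mul_assoc, map_smul, hz, hpoly]
  simp only [map_add, ← AdjoinRoot.smul_mk, map_smul, smul_eq_mul]
  unfold Tr
  ring

end Stmt10Aux

/-- `s³ + 2s² + 3s + 1` is irreducible over `ℚ`, so `V = ℚ[s]/(s³ + 2s² + 3s + 1)` is a
field; the `ℚ`-linear form `ε` with `ε(1) = 1`, `ε(s) = 0`, `ε(s²) = -1` satisfies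
`ε(x) = tr_{V/ℚ}(α·x)` for `α = (19 + 9s + 8s²)/23`. -/
theorem stmt10 :
    Irreducible ((X : ℚ[X]) ^ 3 + 2 * X ^ 2 + 3 * X + 1) ∧
    IsField (ℚ[X] ⧸ Ideal.span {(X : ℚ[X]) ^ 3 + 2 * X ^ 2 + 3 * X + 1}) ∧
    ∀ s : ℚ[X] ⧸ Ideal.span {(X : ℚ[X]) ^ 3 + 2 * X ^ 2 + 3 * X + 1},
      s = Ideal.Quotient.mk (Ideal.span {(X : ℚ[X]) ^ 3 + 2 * X ^ 2 + 3 * X + 1}) X →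
      ∀ ε : (ℚ[X] ⧸ Ideal.span {(X : ℚ[X]) ^ 3 + 2 * X ^ 2 + 3 * X + 1}) →ₗ[ℚ] ℚ,
        ε 1 = 1 → ε s = 0 → ε (s ^ 2) = -1 →
        ∀ x : ℚ[X] ⧸ Ideal.span {(X : ℚ[X]) ^ 3 + 2 * X ^ 2 + 3 * X + 1},
          ε x = Algebra.trace ℚ (ℚ[X] ⧸ Ideal.span {(X : ℚ[X]) ^ 3 + 2 * X ^ 2 + 3 * X + 1})
            (((23 : ℚ)⁻¹ • (19 + 9 * s + 8 * s ^ 2)) * x) := by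
  refine ⟨myP_irr, ?_, ?_⟩
  · have hmax : (Ideal.span {myP} : Ideal ℚ[X]).IsMaximal :=
      PrincipalIdealRing.isMaximal_of_irreducible myP_irr
    exact (Ideal.Quotient.maximal_ideal_iff_isField_quotient _).mp hmax
  · intro s hs ε h1 h2 h3 x
    subst hs
    have key : (ε : AdjoinRoot myP →ₗ[ℚ] ℚ)
        = (Algebra.trace ℚ (AdjoinRoot myP)).comp
            (LinearMap.mulLeft ℚ
              ((23:ℚ)⁻¹ • (19 + 9 * AdjoinRoot.mk myP X + 8 * (AdjoinRoot.mk myP X) ^ 2))) := by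
      apply Module.Basis.ext (AdjoinRoot.powerBasis' myP_monic).basis
      intro i
      rw [(AdjoinRoot.powerBasis' myP_monic).basis_eq_pow]
      have hgen : (AdjoinRoot.powerBasis' myP_monic).gen = AdjoinRoot.mk myP X := rfl
      rw [hgen, LinearMap.comp_apply, LinearMap.mulLeft_apply]
      obtain ⟨i, hi⟩ := i
      have hi3 : i < 3 := by
        rw [show (AdjoinRoot.powerBasis' myP_monic).dim = myP.natDegree from rfl,
          myP_natDegree] at hi
        exact hi
      simp only [Fin.val_mk]
      clear hi
      interval_cases i
      · rw [traceAlpha 0, T0, T1, T2]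
        rw [show ((AdjoinRoot.mk myP X) ^ (0:ℕ) : AdjoinRoot myP) = 1 from pow_zero _]
        rw [show ((23:ℚ)⁻¹ * (19 * 3 + 9 * -2 + 8 * -2) : ℚ) = 1 by norm_num]
        exact h1
      · rw [traceAlpha 1, T1, T2, T3]
        rw [show ((AdjoinRoot.mk myP X) ^ (1:ℕ) : AdjoinRoot myP)
            = AdjoinRoot.mk myP X from pow_one _]
        rw [show ((23:ℚ)⁻¹ * (19 * -2 + 9 * -2 + 8 * 7) : ℚ) = 0 by norm_num]
        exact h2
      · rw [traceAlpha 2, T2, T3, T4]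
        rw [show ((23:ℚ)⁻¹ * (19 * -2 + 9 * 7 + 8 * -6) : ℚ) = -1 by norm_num]
        exact h3
    rw [key]
    rfl
end

section
/- Let φ = (1+√5)/2 ∈ ℚ(√5) be the golden ratio and let j be a primitive cube root of unity, i.e. the class of X in ℚ(j) = ℚ[X]/(X² + X + 1). For integers g ≥ 0 and n ≥ 0 define d_{g,n} = tr_{ℚ(φ)/ℚ}(φⁿ·(2+φ)^{g−1}) and σ_{g,n} = tr_{ℚ(j)/ℚ}(jⁿ·(2+j)^{g−1}) (where for g = 0 the exponent −1 means the inverse of 2+φ, resp. 2+j, in the field), and set p_{g,n} = (d_{g,n} + σ_{g,n})/2 and q_{g,n} = (d_{g,n} − σ_{g,n})/2. Then for every (g,n) in {(0,4), (0,5), (1,2), (1,3), (2,1)} one has p_{g,n} · q_{g,n} = 3g − 3 + n. -/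
lemma quad_trace {K : Type*} [Field K] [Algebra ℚ K] (hK : Module.finrank ℚ K = 2)
    (x : K) (b c : ℚ) (hx : x ^ 2 = algebraMap ℚ K b * x + algebraMap ℚ K c)
    (hirr : ∀ q : ℚ, algebraMap ℚ K q ≠ x) (a r : ℚ) :
    Algebra.trace ℚ K (algebraMap ℚ K a + algebraMap ℚ K r * x) = 2 * a + r * b := by
  have li : LinearIndependent ℚ ![x, 1] := by
    rw [linearIndependent_fin2]
    refine ⟨by simp, fun q hq => hirr q ?_⟩
    rw [Algebra.algebraMap_eq_smul_one]; exact hq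
  let B : Module.Basis (Fin 2) ℚ K := basisOfLinearIndependentOfCardEqFinrank li (by simp [hK])
  have hB : ⇑B = ![x, 1] := coe_basisOfLinearIndependentOfCardEqFinrank li (by simp [hK])
  have hB0 : B 0 = x := by rw [hB]; rfl
  have hB1 : B 1 = (1 : K) := by rw [hB]; rfl
  have htrx : Algebra.trace ℚ K x = b := by
    rw [Algebra.trace_eq_matrix_trace B, Matrix.trace_fin_two,
      Algebra.leftMulMatrix_eq_repr_mul, Algebra.leftMulMatrix_eq_repr_mul, hB0, hB1]
    have e0 : x * x = b • B 0 + c • B 1 := by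
      rw [hB0, hB1, ← sq, hx]; simp [Algebra.smul_def]
    have e1 : x * 1 = (1 : ℚ) • B 0 := by simp [hB0]
    rw [e0, e1, map_add, map_smul, map_smul, map_smul]
    simp [Finsupp.single_apply, B.repr_self]
  rw [map_add, Algebra.trace_algebraMap, hK, ← Algebra.smul_def, map_smul, htrx]
  simp only [smul_eq_mul, nsmul_eq_mul]
  push_cast
  ring

/-- Dimension/signature coincidence for the Fibonacci quantum representations:
with `φ` the golden ratio (generator of `ℚ(√5)` with `φ² = φ + 1`) and `j` a primitive
cube root of unity (generator of `ℚ(j)` with `j² + j + 1 = 0`), setting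
`d = tr(φⁿ(2+φ)^{g-1})`, `σ = tr(jⁿ(2+j)^{g-1})`, `p = (d+σ)/2`, `q = (d-σ)/2`,
one has `p·q = 3g - 3 + n` for `(g,n) ∈ {(0,4),(0,5),(1,2),(1,3),(2,1)}`. -/
theorem stmt14 (K₁ : Type*) [Field K₁] [Algebra ℚ K₁]
    (φ : K₁) (hφ : φ ^ 2 = φ + 1) (hK₁ : Module.finrank ℚ K₁ = 2)
    (K₂ : Type*) [Field K₂] [Algebra ℚ K₂]
    (j : K₂) (hj : j ^ 2 + j + 1 = 0) (hK₂ : Module.finrank ℚ K₂ = 2)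
    (g n : ℕ)
    (hgn : (g, n) ∈ ({(0, 4), (0, 5), (1, 2), (1, 3), (2, 1)} : Set (ℕ × ℕ))) :
    ∀ d σ p q : ℚ,
      d = Algebra.trace ℚ K₁ (φ ^ n * (2 + φ) ^ ((g : ℤ) - 1)) →
      σ = Algebra.trace ℚ K₂ (j ^ n * (2 + j) ^ ((g : ℤ) - 1)) →
      p = (d + σ) / 2 → q = (d - σ) / 2 →
      p * q = 3 * (g : ℚ) - 3 + (n : ℚ) := by
  intro d σ p q hd hσ hp hq
  subst hp hq hd hσ
  have cz1 : CharZero K₁ := charZero_of_injective_algebraMap (algebraMap ℚ K₁).injective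
  have cz2 : CharZero K₂ := charZero_of_injective_algebraMap (algebraMap ℚ K₂).injective
  have hirr1 : ∀ r : ℚ, algebraMap ℚ K₁ r ≠ φ := by
    intro r hr
    have h2 : algebraMap ℚ K₁ (r ^ 2) = algebraMap ℚ K₁ (r + 1) := by
      rw [map_add, map_one, map_pow, hr, hφ]
    have hq2 : r ^ 2 = r + 1 := (algebraMap ℚ K₁).injective h2
    have h5 : Irrational (Real.sqrt 5) := by
      have := (by norm_num : Nat.Prime 5).irrational_sqrt
      simpa using this
    apply h5
    refine ⟨|2 * r - 1|, ?_⟩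
    have hr5 : ((2 * r - 1 : ℚ) : ℝ) ^ 2 = 5 := by
      have : (r : ℝ) ^ 2 = (r : ℝ) + 1 := by exact_mod_cast hq2
      push_cast
      nlinarith [this]
    rw [Rat.cast_abs, ← Real.sqrt_sq_eq_abs, hr5]
  have hirr2 : ∀ r : ℚ, algebraMap ℚ K₂ r ≠ j := by
    intro r hr
    have h2 : algebraMap ℚ K₂ (r ^ 2 + r + 1) = algebraMap ℚ K₂ 0 := by
      rw [map_add, map_add, map_one, map_pow, hr, map_zero, hj]
    have hq2 : r ^ 2 + r + 1 = 0 := (algebraMap ℚ K₂).injective h2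
    nlinarith [sq_nonneg (2 * r + 1)]
  have hx1 : φ ^ 2 = algebraMap ℚ K₁ 1 * φ + algebraMap ℚ K₁ 1 := by
    rw [map_one, one_mul, hφ]
  have hx2 : j ^ 2 = algebraMap ℚ K₂ (-1) * j + algebraMap ℚ K₂ (-1) := by
    simp only [map_neg, map_one]
    linear_combination hj
  have hne1 : (2 : K₁) + φ ≠ 0 := fun h =>
    hirr1 (-2) (by rw [map_neg, map_ofNat]; linear_combination -h)
  have hne2 : (2 : K₂) + j ≠ 0 := fun h =>
    hirr2 (-2) (by rw [map_neg, map_ofNat]; linear_combination -h)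
  simp only [Set.mem_insert_iff, Set.mem_singleton_iff, Prod.mk.injEq] at hgn
  rcases hgn with ⟨hg, hn⟩ | ⟨hg, hn⟩ | ⟨hg, hn⟩ | ⟨hg, hn⟩ | ⟨hg, hn⟩ <;> subst hg <;> subst hn
  · have e1 : φ ^ (4:ℕ) * (2 + φ) ^ (((0:ℕ):ℤ) - 1)
        = algebraMap ℚ K₁ (3/5) + algebraMap ℚ K₁ (4/5) * φ := by
      rw [show ((0:ℕ):ℤ) - 1 = -1 by norm_num, zpow_neg, zpow_one, ← div_eq_mul_inv,
        div_eq_iff hne1]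
      simp only [eq_ratCast]
      push_cast
      linear_combination (φ ^ 2 + φ + 6/5) * hφ
    have e2 : j ^ (4:ℕ) * (2 + j) ^ (((0:ℕ):ℤ) - 1)
        = algebraMap ℚ K₂ (1/3) + algebraMap ℚ K₂ (2/3) * j := by
      rw [show ((0:ℕ):ℤ) - 1 = -1 by norm_num, zpow_neg, zpow_one, ← div_eq_mul_inv,
        div_eq_iff hne2]
      simp only [eq_ratCast]
      push_cast
      linear_combination (j ^ 2 - j - 2/3) * hj
    rw [e1, e2, quad_trace hK₁ φ 1 1 hx1 hirr1, quad_trace hK₂ j (-1) (-1) hx2 hirr2]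
    norm_num
  · have e1 : φ ^ (5:ℕ) * (2 + φ) ^ (((0:ℕ):ℤ) - 1)
        = algebraMap ℚ K₁ (4/5) + algebraMap ℚ K₁ (7/5) * φ := by
      rw [show ((0:ℕ):ℤ) - 1 = -1 by norm_num, zpow_neg, zpow_one, ← div_eq_mul_inv,
        div_eq_iff hne1]
      simp only [eq_ratCast]
      push_cast
      linear_combination (φ ^ 3 + φ ^ 2 + 2 * φ + 8/5) * hφ
    have e2 : j ^ (5:ℕ) * (2 + j) ^ (((0:ℕ):ℤ) - 1)
        = algebraMap ℚ K₂ (-2/3) + algebraMap ℚ K₂ (-1/3) * j := by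
      rw [show ((0:ℕ):ℤ) - 1 = -1 by norm_num, zpow_neg, zpow_one, ← div_eq_mul_inv,
        div_eq_iff hne2]
      simp only [eq_ratCast]
      push_cast
      linear_combination (j ^ 3 - j ^ 2 + 4/3) * hj
    rw [e1, e2, quad_trace hK₁ φ 1 1 hx1 hirr1, quad_trace hK₂ j (-1) (-1) hx2 hirr2]
    norm_num
  · have e1 : φ ^ (2:ℕ) * (2 + φ) ^ (((1:ℕ):ℤ) - 1)
        = algebraMap ℚ K₁ 1 + algebraMap ℚ K₁ 1 * φ := by
      rw [show ((1:ℕ):ℤ) - 1 = 0 by norm_num, zpow_zero, mul_one]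
      simp only [eq_ratCast]
      push_cast
      linear_combination hφ
    have e2 : j ^ (2:ℕ) * (2 + j) ^ (((1:ℕ):ℤ) - 1)
        = algebraMap ℚ K₂ (-1) + algebraMap ℚ K₂ (-1) * j := by
      rw [show ((1:ℕ):ℤ) - 1 = 0 by norm_num, zpow_zero, mul_one]
      simp only [eq_ratCast]
      push_cast
      linear_combination hj
    rw [e1, e2, quad_trace hK₁ φ 1 1 hx1 hirr1, quad_trace hK₂ j (-1) (-1) hx2 hirr2]
    norm_num
  · have e1 : φ ^ (3:ℕ) * (2 + φ) ^ (((1:ℕ):ℤ) - 1)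
        = algebraMap ℚ K₁ 1 + algebraMap ℚ K₁ 2 * φ := by
      rw [show ((1:ℕ):ℤ) - 1 = 0 by norm_num, zpow_zero, mul_one]
      simp only [eq_ratCast]
      push_cast
      linear_combination (φ + 1) * hφ
    have e2 : j ^ (3:ℕ) * (2 + j) ^ (((1:ℕ):ℤ) - 1)
        = algebraMap ℚ K₂ 1 + algebraMap ℚ K₂ 0 * j := by
      rw [show ((1:ℕ):ℤ) - 1 = 0 by norm_num, zpow_zero, mul_one]
      simp only [eq_ratCast]
      push_cast
      linear_combination (j - 1) * hj
    rw [e1, e2, quad_trace hK₁ φ 1 1 hx1 hirr1, quad_trace hK₂ j (-1) (-1) hx2 hirr2]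
    norm_num
  · have e1 : φ ^ (1:ℕ) * (2 + φ) ^ (((2:ℕ):ℤ) - 1)
        = algebraMap ℚ K₁ 1 + algebraMap ℚ K₁ 3 * φ := by
      rw [show ((2:ℕ):ℤ) - 1 = 1 by norm_num, zpow_one, pow_one]
      simp only [eq_ratCast]
      push_cast
      linear_combination hφ
    have e2 : j ^ (1:ℕ) * (2 + j) ^ (((2:ℕ):ℤ) - 1)
        = algebraMap ℚ K₂ (-1) + algebraMap ℚ K₂ 1 * j := by
      rw [show ((2:ℕ):ℤ) - 1 = 1 by norm_num, zpow_one, pow_one]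
      simp only [eq_ratCast]
      push_cast
      linear_combination hj
    rw [e1, e2, quad_trace hK₁ φ 1 1 hx1 hirr1, quad_trace hK₂ j (-1) (-1) hx2 hirr2]
    norm_num
end
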